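/- Let g > 0, a₁ < a₀, and let u_m, h_m, u₊, h₊ > 0 satisfy the stationary-wave relations h_m u_m = h₊ u₊ and u_m²/2 + g(h_m + a₀) = u₊²/2 + g(h₊ + a₁). Assume both states are in region III: 0 < u_m < √(g h_m) and 0 < u₊ < √(g h₊), and assume u₊ < u_m. Define h̄_m = (2√(g h_m) − u_m)²/(4g), h̄₊ = (2√(g h₊) − u₊)²/(4g), and h̃ = h̄_m + a₀ − a₁. Then h̃ < h̄₊; in fact h̃ − h̄₊ = (u₊² − u_m²)/(4g) + √(h₊ u₊)(√u₊ − √u_m)/√g < 0. -/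

import Mathlib

/-- In region III (`0 < u < √(gh)`), if the stationary wave connects
`(u_m,h_m,a₀)` to `(u₊,h₊,a₁)` with `a₁ < a₀` and `u₊ < u_m`, and
`h̄_m = (2√(gh_m) − u_m)²/(4g)`, `h̄₊ = (2√(gh₊) − u₊)²/(4g)`,
`h̃ = h̄_m + a₀ − a₁`, then
`h̃ − h̄₊ = (u₊² − u_m²)/(4g) + √(h₊u₊)(√u₊ − √u_m)/√g < 0`,
i.e. `h̃ < h̄₊`. -/
theorem stmt_16 (g a₀ a₁ um hm up hp : ℝ) (hg : 0 < g) (ha : a₁ < a₀)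
    (hhm : 0 < hm) (hhp : 0 < hp)
    (hmass : hm * um = hp * up)
    (hener : um ^ 2 / 2 + g * (hm + a₀) = up ^ 2 / 2 + g * (hp + a₁))
    (humpos : 0 < um) (hIIIm : um < Real.sqrt (g * hm))
    (huppos : 0 < up) (hIIIp : up < Real.sqrt (g * hp))
    (hlt : up < um) :
    ((2 * Real.sqrt (g * hm) - um) ^ 2 / (4 * g) + a₀ - a₁)
        - (2 * Real.sqrt (g * hp) - up) ^ 2 / (4 * g)
      = (up ^ 2 - um ^ 2) / (4 * g)
        + Real.sqrt (hp * up) * (Real.sqrt up - Real.sqrt um) / Real.sqrt g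
    ∧ (2 * Real.sqrt (g * hm) - um) ^ 2 / (4 * g) + a₀ - a₁
        < (2 * Real.sqrt (g * hp) - up) ^ 2 / (4 * g) := by
  have hg' : g ≠ 0 := hg.ne'
  have hsg : 0 < Real.sqrt g := Real.sqrt_pos.mpr hg
  have hsg2 : Real.sqrt g ^ 2 = g := Real.sq_sqrt hg.le
  have e1 : Real.sqrt (g * hm) = Real.sqrt g * Real.sqrt hm := Real.sqrt_mul hg.le _
  have e2 : Real.sqrt (g * hp) = Real.sqrt g * Real.sqrt hp := Real.sqrt_mul hg.le _
  have e3 : Real.sqrt (hp * up) = Real.sqrt hp * Real.sqrt up := Real.sqrt_mul hhp.le _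
  have hhm2 : Real.sqrt hm ^ 2 = hm := Real.sq_sqrt hhm.le
  have hhp2 : Real.sqrt hp ^ 2 = hp := Real.sq_sqrt hhp.le
  have hum2 : Real.sqrt um ^ 2 = um := Real.sq_sqrt humpos.le
  have hup2 : Real.sqrt up ^ 2 = up := Real.sq_sqrt huppos.le
  have K : Real.sqrt hm * Real.sqrt um = Real.sqrt hp * Real.sqrt up := by
    rw [← Real.sqrt_mul hhm.le, ← Real.sqrt_mul hhp.le, hmass]
  have key : um * Real.sqrt hm = Real.sqrt hp * Real.sqrt up * Real.sqrt um := by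
    linear_combination Real.sqrt um * K - Real.sqrt hm * hum2
  set s := Real.sqrt g
  set A := Real.sqrt hm
  set B := Real.sqrt hp
  set P := Real.sqrt up
  set U := Real.sqrt um
  have hmul : ((2 * (s * A) - um) ^ 2 + (a₀ - a₁) * (4 * g) - (2 * (s * B) - up) ^ 2) * s
      = (up ^ 2 - um ^ 2) * s + B * P * (P - U) * (4 * g) := by
    linear_combination (4 * s) * hener
      + (4 * s * A ^ 2 - 4 * s * B ^ 2 - 4 * A * um + 4 * B * up) * hsg2
      + (4 * g * s) * hhm2 - (4 * g * s) * hhp2 - (4 * g) * key - (4 * g * B) * hup2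
  have heq : ((2 * Real.sqrt (g * hm) - um) ^ 2 / (4 * g) + a₀ - a₁)
        - (2 * Real.sqrt (g * hp) - up) ^ 2 / (4 * g)
      = (up ^ 2 - um ^ 2) / (4 * g)
        + Real.sqrt (hp * up) * (Real.sqrt up - Real.sqrt um) / Real.sqrt g := by
    rw [e1, e2, e3]
    field_simp
    linear_combination hmul
  refine ⟨heq, ?_⟩
  have hsup : 0 < P := Real.sqrt_pos.mpr huppos
  have hshp : 0 < B := Real.sqrt_pos.mpr hhp
  have hsu_lt : P < U := Real.sqrt_lt_sqrt huppos.le hlt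
  have h1 : (up ^ 2 - um ^ 2) / (4 * g) < 0 := by
    apply div_neg_of_neg_of_pos
    · nlinarith
    · positivity
  have h2 : Real.sqrt (hp * up) * (Real.sqrt up - Real.sqrt um) / Real.sqrt g ≤ 0 := by
    rw [e3]
    apply div_nonpos_of_nonpos_of_nonneg
    · apply mul_nonpos_of_nonneg_of_nonpos (by positivity)
      linarith
    · exact hsg.le
  linarith [heq, h1, h2]
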